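/- Let U ⊆ ℂⁿ be open, let r : U → ℝ be of class C² with L_r(z;X) > 0 for every z ∈ U and every nonzero X ∈ ℂⁿ, and let K ⊆ U be compact. Then there exist constants C > 0 and λ > 0 such that for every ζ ∈ K and every z ∈ ℂⁿ with ‖z−ζ‖ < λ one has z ∈ U and r(z) ≥ r(ζ) − 2 Re P_r(z;ζ) + C‖z−ζ‖². -/

import Mathlib

open Complex Metric Set Function

noncomputable section

/-- Directional Wirtinger derivative `∂_v f(z) = (1/2)(Df(z)v − i·Df(z)(i·v))`.
For `v = e_j` this is the Wirtinger derivative `∂f/∂z_j(z)`; in coordinates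
`∂_v = Σ_j v_j ∂/∂z_j`. -/
def wDeriv {F : Type*} [NormedAddCommGroup F] [NormedSpace ℂ F]
    (f : F → ℂ) (v : F) (z : F) : ℂ :=
  (1 / 2) * (fderiv ℝ f z v - Complex.I * fderiv ℝ f z (Complex.I • v))

/-- Directional conjugate Wirtinger derivative `∂̄_v f(z) = (1/2)(Df(z)v + i·Df(z)(i·v))`;
in coordinates `∂̄_v = Σ_k (conj v_k) ∂/∂z̄_k`. -/
def wDerivBar {F : Type*} [NormedAddCommGroup F] [NormedSpace ℂ F]
    (f : F → ℂ) (v : F) (z : F) : ℂ :=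
  (1 / 2) * (fderiv ℝ f z v + Complex.I * fderiv ℝ f z (Complex.I • v))

/-- The Levi form `L_r(z;X) = Σ_{j,k} ∂²r/∂z_j∂z̄_k(z) X_j (conj X_k)` of a real-valued
function, written via directional Wirtinger derivatives. -/
def leviForm {F : Type*} [NormedAddCommGroup F] [NormedSpace ℂ F]
    (r : F → ℝ) (z X : F) : ℂ :=
  wDerivBar (fun w => wDeriv (fun y => (r y : ℂ)) X w) X z

/-- The Levi polynomial
`P_r(z;ζ) = −Σ_j ∂r/∂z_j(ζ)(z_j−ζ_j) − (1/2) Σ_{i,j} ∂²r/∂z_i∂z_j(ζ)(z_i−ζ_i)(z_j−ζ_j)`. -/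
def leviPolynomial {F : Type*} [NormedAddCommGroup F] [NormedSpace ℂ F]
    (r : F → ℝ) (ζ z : F) : ℂ :=
  - wDeriv (fun y => (r y : ℂ)) (z - ζ) ζ
  - (1 / 2) * wDeriv (fun w => wDeriv (fun y => (r y : ℂ)) (z - ζ) w) (z - ζ) ζ


section AuxLemmas

variable {E : Type*} [NormedAddCommGroup E] [NormedSpace ℂ E]

lemma fderiv_ofReal_comp {r : E → ℝ} {z : E} (h : DifferentiableAt ℝ r z) :
    fderiv ℝ (fun y => (r y : ℂ)) z = Complex.ofRealCLM.comp (fderiv ℝ r z) :=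
  (Complex.ofRealCLM.hasFDerivAt.comp z h.hasFDerivAt).fderiv

lemma wDeriv_eq {r : E → ℝ} {z : E} (h : DifferentiableAt ℝ r z) (v : E) :
    wDeriv (fun y => (r y : ℂ)) v z
      = (1 / 2) * ((fderiv ℝ r z v : ℂ) - Complex.I * (fderiv ℝ r z (Complex.I • v) : ℂ)) := by
  unfold wDeriv
  rw [fderiv_ofReal_comp h]
  simp

lemma wDeriv_re {r : E → ℝ} {z : E} (h : DifferentiableAt ℝ r z) (v : E) :
    (wDeriv (fun y => (r y : ℂ)) v z).re = (1 / 2) * fderiv ℝ r z v := by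
  rw [wDeriv_eq h]
  simp [Complex.mul_re, Complex.mul_im]

lemma hasFDerivAt_wDeriv {r : E → ℝ} {U : Set E} (hU : IsOpen U)
    (hr : ContDiffOn ℝ 2 r U) {z : E} (hz : z ∈ U) (v : E) :
    HasFDerivAt (fun w => wDeriv (fun y => (r y : ℂ)) v w)
      ((1 / 2 : ℂ) • (Complex.ofRealCLM.comp ((fderiv ℝ (fderiv ℝ r) z).flip v)
        - Complex.I • Complex.ofRealCLM.comp ((fderiv ℝ (fderiv ℝ r) z).flip (Complex.I • v)))) z := by
  have hdiff : ∀ w ∈ U, DifferentiableAt ℝ r w := fun w hw =>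
    (hr.contDiffAt (hU.mem_nhds hw)).differentiableAt two_ne_zero
  have hd1 : ContDiffOn ℝ 1 (fderiv ℝ r) U := hr.fderiv_of_isOpen hU (by norm_num)
  have hB : HasFDerivAt (fderiv ℝ r) (fderiv ℝ (fderiv ℝ r) z) z :=
    (((hd1.contDiffAt (hU.mem_nhds hz)).differentiableAt one_ne_zero)).hasFDerivAt
  set B := fderiv ℝ (fderiv ℝ r) z with hBdef
  have h1 : HasFDerivAt (fun w => fderiv ℝ r w v) (B.flip v) z := by
    simpa using hB.clm_apply (hasFDerivAt_const v z)
  have h2 : HasFDerivAt (fun w => fderiv ℝ r w (Complex.I • v)) (B.flip (Complex.I • v)) z := by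
    simpa using hB.clm_apply (hasFDerivAt_const (Complex.I • v) z)
  have h1' : HasFDerivAt (fun w => ((fderiv ℝ r w v : ℝ) : ℂ))
      (Complex.ofRealCLM.comp (B.flip v)) z :=
    Complex.ofRealCLM.hasFDerivAt.comp z h1
  have h2' : HasFDerivAt (fun w => ((fderiv ℝ r w (Complex.I • v) : ℝ) : ℂ))
      (Complex.ofRealCLM.comp (B.flip (Complex.I • v))) z :=
    Complex.ofRealCLM.hasFDerivAt.comp z h2
  have h3 : HasFDerivAt
      (fun w => (1 / 2 : ℂ) * ((fderiv ℝ r w v : ℂ) - Complex.I * (fderiv ℝ r w (Complex.I • v) : ℂ)))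
      ((1 / 2 : ℂ) • (Complex.ofRealCLM.comp (B.flip v)
        - Complex.I • Complex.ofRealCLM.comp (B.flip (Complex.I • v)))) z :=
    (h1'.sub (h2'.const_mul Complex.I)).const_mul (1 / 2 : ℂ)
  apply h3.congr_of_eventuallyEq
  filter_upwards [hU.mem_nhds hz] with w hw
  exact wDeriv_eq (hdiff w hw) v

lemma wDeriv_def {F : Type*} [NormedAddCommGroup F] [NormedSpace ℂ F]
    (f : F → ℂ) (v : F) (z : F) :
    wDeriv f v z
      = (1 / 2) * (fderiv ℝ f z v - Complex.I * fderiv ℝ f z (Complex.I • v)) := rfl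

lemma fderiv_wDeriv_apply {r : E → ℝ} {U : Set E} (hU : IsOpen U)
    (hr : ContDiffOn ℝ 2 r U) {z : E} (hz : z ∈ U) (v u : E) :
    fderiv ℝ (fun w => wDeriv (fun y => (r y : ℂ)) v w) z u
      = (1 / 2) * ((fderiv ℝ (fderiv ℝ r) z u v : ℂ)
          - Complex.I * (fderiv ℝ (fderiv ℝ r) z u (Complex.I • v) : ℂ)) := by
  rw [(hasFDerivAt_wDeriv hU hr hz v).fderiv]
  simp [ContinuousLinearMap.smul_apply, ContinuousLinearMap.sub_apply,
    ContinuousLinearMap.comp_apply, ContinuousLinearMap.flip_apply, smul_eq_mul]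

lemma leviForm_re {r : E → ℝ} {U : Set E} (hU : IsOpen U)
    (hr : ContDiffOn ℝ 2 r U) {z : E} (hz : z ∈ U) (X : E) :
    (leviForm r z X).re
      = (1 / 4) * (fderiv ℝ (fderiv ℝ r) z X X
          + fderiv ℝ (fderiv ℝ r) z (Complex.I • X) (Complex.I • X)) := by
  unfold leviForm wDerivBar
  rw [fderiv_wDeriv_apply hU hr hz X X, fderiv_wDeriv_apply hU hr hz X (Complex.I • X)]
  simp [Complex.mul_re, Complex.mul_im]
  ring

lemma leviPolynomial_re {r : E → ℝ} {U : Set E} (hU : IsOpen U)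
    (hr : ContDiffOn ℝ 2 r U) {ζ : E} (hζ : ζ ∈ U) (z : E) :
    (leviPolynomial r ζ z).re
      = -(1 / 2) * fderiv ℝ r ζ (z - ζ)
        - (1 / 8) * (fderiv ℝ (fderiv ℝ r) ζ (z - ζ) (z - ζ)
            - fderiv ℝ (fderiv ℝ r) ζ (Complex.I • (z - ζ)) (Complex.I • (z - ζ))) := by
  have hdiff : DifferentiableAt ℝ r ζ :=
    (hr.contDiffAt (hU.mem_nhds hζ)).differentiableAt two_ne_zero
  unfold leviPolynomial
  have h1 : (wDeriv (fun w => wDeriv (fun y => (r y : ℂ)) (z - ζ) w) (z - ζ) ζ).re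
      = (1 / 4) * (fderiv ℝ (fderiv ℝ r) ζ (z - ζ) (z - ζ)
          - fderiv ℝ (fderiv ℝ r) ζ (Complex.I • (z - ζ)) (Complex.I • (z - ζ))) := by
    rw [wDeriv_def]
    rw [fderiv_wDeriv_apply hU hr hζ (z - ζ) (z - ζ),
      fderiv_wDeriv_apply hU hr hζ (z - ζ) (Complex.I • (z - ζ))]
    simp [Complex.mul_re, Complex.mul_im]
    ring
  have h2 := wDeriv_re hdiff (z - ζ)
  simp only [Complex.sub_re, Complex.neg_re, Complex.mul_re]
  rw [h2]
  have h3 : (wDeriv (fun w => wDeriv (fun y => (r y : ℂ)) (z - ζ) w) (z - ζ) ζ).im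
      = (wDeriv (fun w => wDeriv (fun y => (r y : ℂ)) (z - ζ) w) (z - ζ) ζ).im := rfl
  rw [h1]
  norm_num
  ring

end AuxLemmas

set_option maxHeartbeats 1000000 in
/-- Let `U ⊆ ℂⁿ` be open, `r : U → ℝ` of class `C²` with everywhere
positive definite Levi form, and `K ⊆ U` compact. Then there are constants `C > 0` and
`λ > 0` such that for every `ζ ∈ K` and every `z` with `‖z − ζ‖ < λ` one has `z ∈ U` and
`r z ≥ r ζ − 2 Re P_r(z;ζ) + C ‖z−ζ‖²`. -/
theorem statement_4 {n : ℕ} (U : Set (EuclideanSpace ℂ (Fin n))) (hU : IsOpen U)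
    (r : EuclideanSpace ℂ (Fin n) → ℝ) (hr : ContDiffOn ℝ 2 r U)
    (hLevi : ∀ z ∈ U, ∀ X : EuclideanSpace ℂ (Fin n), X ≠ 0 → 0 < (leviForm r z X).re)
    (K : Set (EuclideanSpace ℂ (Fin n))) (hK : IsCompact K) (hKU : K ⊆ U) :
    ∃ C > (0 : ℝ), ∃ lam > (0 : ℝ), ∀ ζ ∈ K, ∀ z : EuclideanSpace ℂ (Fin n),
      ‖z - ζ‖ < lam →
        z ∈ U ∧ r ζ - 2 * (leviPolynomial r ζ z).re + C * ‖z - ζ‖ ^ 2 ≤ r z := by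
  classical
  obtain ⟨δ₀, hδ₀, hK'U⟩ := hK.exists_cthickening_subset_open hU hKU
  set K' : Set (EuclideanSpace ℂ (Fin n)) := cthickening δ₀ K with hK'def
  have hK'cpt : IsCompact K' := by rw [hK'def]; exact hK.cthickening
  have hKK' : K ⊆ K' := self_subset_cthickening K
  set B := fderiv ℝ (fderiv ℝ r) with hBdef
  have hdiff : ∀ w ∈ U, DifferentiableAt ℝ r w := fun w hw =>
    (hr.contDiffAt (hU.mem_nhds hw)).differentiableAt two_ne_zero
  have hd1 : ContDiffOn ℝ 1 (fderiv ℝ r) U := hr.fderiv_of_isOpen hU (by norm_num)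
  have hdiff1 : ∀ w ∈ U, DifferentiableAt ℝ (fderiv ℝ r) w := fun w hw =>
    (hd1.contDiffAt (hU.mem_nhds hw)).differentiableAt one_ne_zero
  have hBcont : ContinuousOn B U := hd1.continuousOn_fderiv_of_isOpen hU le_rfl
  -- the quantitative positivity of the Levi form on K'
  have hq : ∃ m > (0:ℝ), ∀ ζ ∈ K', ∀ X : (EuclideanSpace ℂ (Fin n)),
      m * ‖X‖ ^ 2 ≤ B ζ X X + B ζ (Complex.I • X) (Complex.I • X) := by
    set q : (EuclideanSpace ℂ (Fin n)) × (EuclideanSpace ℂ (Fin n)) → ℝ := fun p => B p.1 p.2 p.2 + B p.1 (Complex.I • p.2) (Complex.I • p.2)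
      with hqdef
    set S : Set ((EuclideanSpace ℂ (Fin n)) × (EuclideanSpace ℂ (Fin n))) := K' ×ˢ sphere (0 : (EuclideanSpace ℂ (Fin n))) 1 with hSdef
    have hScpt : IsCompact S := hK'cpt.prod (isCompact_sphere 0 1)
    have hqcont : ContinuousOn q S := by
      have hBS : ContinuousOn (fun p : (EuclideanSpace ℂ (Fin n)) × (EuclideanSpace ℂ (Fin n)) => B p.1) S := by
        apply (hBcont.mono hK'U).comp continuousOn_fst
        intro p hp; exact hp.1
      have h1 : ContinuousOn (fun p : (EuclideanSpace ℂ (Fin n)) × (EuclideanSpace ℂ (Fin n)) => B p.1 p.2 p.2) S :=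
        (hBS.clm_apply continuousOn_snd).clm_apply continuousOn_snd
      have h2 : ContinuousOn (fun p : (EuclideanSpace ℂ (Fin n)) × (EuclideanSpace ℂ (Fin n)) => B p.1 (Complex.I • p.2) (Complex.I • p.2)) S :=
        (hBS.clm_apply (continuousOn_snd.const_smul Complex.I)).clm_apply
          (continuousOn_snd.const_smul Complex.I)
      exact h1.add h2
    -- key: q ≥ m on K' × sphere, then scale
    have key : ∃ m > (0:ℝ), ∀ p ∈ S, m ≤ q p := by
      rcases S.eq_empty_or_nonempty with hS | hS
      · exact ⟨1, one_pos, by simp [hS]⟩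
      · obtain ⟨p₀, hp₀, hmin⟩ := hScpt.exists_isMinOn hS hqcont
        refine ⟨q p₀, ?_, fun p hp => hmin hp⟩
        have hz₀U : p₀.1 ∈ U := hK'U hp₀.1
        have hX₀ : p₀.2 ≠ 0 := by
          have : ‖p₀.2‖ = 1 := by simpa using hp₀.2
          intro h; rw [h] at this; simp at this
        have := hLevi p₀.1 hz₀U p₀.2 hX₀
        rw [leviForm_re hU hr hz₀U] at this
        have : 0 < B p₀.1 p₀.2 p₀.2
            + B p₀.1 (Complex.I • p₀.2) (Complex.I • p₀.2) := by linarith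
        simpa [hqdef] using this
    obtain ⟨m, hm, hmS⟩ := key
    refine ⟨m, hm, fun ζ hζ X => ?_⟩
    rcases eq_or_ne X 0 with rfl | hX
    · simp
    · set c : ℝ := ‖X‖ with hc
      have hc0 : c ≠ 0 := norm_ne_zero_iff.2 hX
      set Y : (EuclideanSpace ℂ (Fin n)) := c⁻¹ • X with hY
      have hYs : Y ∈ sphere (0 : (EuclideanSpace ℂ (Fin n))) 1 := by
        simp [hY, norm_smul, hc, abs_of_nonneg, inv_mul_cancel₀ hc0, inv_mul_cancel₀ (norm_ne_zero_iff.2 hX)]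
      have hXY : X = c • Y := by
        rw [hY, smul_smul, mul_inv_cancel₀ hc0, one_smul]
      have hqY := hmS (ζ, Y) ⟨hζ, hYs⟩
      rw [hXY, show Complex.I • c • Y = c • Complex.I • Y from smul_comm _ _ _]
      have e1 : B ζ (c • Y) (c • Y) = c ^ 2 * B ζ Y Y := by
        simp [map_smul, smul_eq_mul]; ring
      have e2 : B ζ (c • (Complex.I • Y)) (c • (Complex.I • Y))
          = c ^ 2 * B ζ (Complex.I • Y) (Complex.I • Y) := by
        simp [map_smul, smul_eq_mul]; ring
      rw [e1, e2]
      have hc2 : (0:ℝ) ≤ c ^ 2 := sq_nonneg c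
      have hq1 : m ≤ B ζ Y Y + B ζ (Complex.I • Y) (Complex.I • Y) := by
        simpa [hqdef] using hqY
      have h2 := mul_le_mul_of_nonneg_left hq1 hc2
      calc m * c ^ 2 = c ^ 2 * m := by ring
        _ ≤ c ^ 2 * (B ζ Y Y + B ζ (Complex.I • Y) (Complex.I • Y)) := h2
        _ = c ^ 2 * B ζ Y Y + c ^ 2 * B ζ (Complex.I • Y) (Complex.I • Y) := by ring
  obtain ⟨m, hm, hqm⟩ := hq
  -- uniform continuity of B on K'
  have hBuc := hK'cpt.uniformContinuousOn_of_continuous (hBcont.mono hK'U)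
  replace hBuc := (Metric.uniformContinuousOn_iff (f := B) (s := K')).1 hBuc
  obtain ⟨δB, hδB, hB8⟩ := hBuc (m / 8) (by positivity)
  refine ⟨m / 8, by positivity, min δ₀ δB, by positivity, fun ζ hζ z hzlt => ?_⟩
  set h : (EuclideanSpace ℂ (Fin n)) := z - ζ with hh
  have hζU : ζ ∈ U := hKU hζ
  have hballK' : ∀ w : (EuclideanSpace ℂ (Fin n)), dist w ζ ≤ ‖h‖ → w ∈ K' := by
    intro w hw
    exact mem_cthickening_of_dist_le w ζ δ₀ K hζ
      (hw.trans (le_of_lt (lt_of_lt_of_le hzlt (min_le_left _ _))))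
  have hzK' : z ∈ K' := hballK' z (by rw [dist_eq_norm])
  have hzU : z ∈ U := hK'U hzK'
  refine ⟨hzU, ?_⟩
  set cb : Set (EuclideanSpace ℂ (Fin n)) := closedBall ζ ‖h‖ with hcb
  have hcbK' : cb ⊆ K' := fun w hw => hballK' w (by simpa [hcb, dist_comm] using hw)
  have hcbU : ∀ w ∈ cb, w ∈ U := fun w hw => hK'U (hcbK' hw)
  have hζcb : ζ ∈ cb := mem_closedBall_self (norm_nonneg h)
  have hzcb : z ∈ cb := by simp [hcb, dist_eq_norm, hh]
  -- symmetry of B ζ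
  have Bsymm : ∀ a b : (EuclideanSpace ℂ (Fin n)), B ζ a b = B ζ b a := by
    intro a b
    apply second_derivative_symmetric_of_eventually (f := r) (f' := fderiv ℝ r)
    · filter_upwards [hU.mem_nhds hζU] with w hw
      exact (hdiff w hw).hasFDerivAt
    · exact (hdiff1 ζ hζU).hasFDerivAt
  -- first MVT: ψ
  set ψ : (EuclideanSpace ℂ (Fin n)) → ((EuclideanSpace ℂ (Fin n)) →L[ℝ] ℝ) := fun w => fderiv ℝ r w - (B ζ) (w - ζ) with hψ
  have hBζw : ∀ w : (EuclideanSpace ℂ (Fin n)), HasFDerivAt (fun w => (B ζ) (w - ζ)) (B ζ) w := by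
    intro w
    have := (B ζ).hasFDerivAt.comp w ((hasFDerivAt_id w).sub_const ζ)
    rw [ContinuousLinearMap.comp_id] at this
    exact this
  have hψd : ∀ w ∈ cb, HasFDerivWithinAt ψ (B w - B ζ) cb w := by
    intro w hw
    exact (((hdiff1 w (hcbU w hw)).hasFDerivAt).sub (hBζw w)).hasFDerivWithinAt
  have hψb : ∀ w ∈ cb, ‖B w - B ζ‖ ≤ m / 8 := by
    intro w hw
    have hwK' : w ∈ K' := hcbK' hw
    have hdw : dist w ζ < δB := by
      have : dist w ζ ≤ ‖h‖ := by simpa [hcb, dist_comm] using hw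
      exact lt_of_le_of_lt this (lt_of_lt_of_le hzlt (min_le_right _ _))
    have := hB8 w hwK' ζ (hKK' hζ) hdw
    exact (dist_eq_norm (B w) (B ζ) ▸ this).le
  have hψmvt : ∀ w ∈ cb, ‖ψ w - ψ ζ‖ ≤ (m / 8) * ‖w - ζ‖ := fun w hw =>
    (convex_closedBall ζ ‖h‖).norm_image_sub_le_of_norm_hasFDerivWithin_le hψd hψb hζcb hw
  -- second MVT: φ
  set φ : (EuclideanSpace ℂ (Fin n)) → ℝ := fun w => r w - fderiv ℝ r ζ (w - ζ) - (1/2) * (B ζ (w - ζ)) (w - ζ) with hφ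
  have hφd : ∀ w ∈ cb, HasFDerivWithinAt φ (ψ w - ψ ζ) cb w := by
    intro w hw
    have hA : HasFDerivAt r (fderiv ℝ r w) w := (hdiff w (hcbU w hw)).hasFDerivAt
    have hL : HasFDerivAt (fun w : (EuclideanSpace ℂ (Fin n)) => fderiv ℝ r ζ (w - ζ)) (fderiv ℝ r ζ) w := by
      have := (fderiv ℝ r ζ).hasFDerivAt.comp w ((hasFDerivAt_id w).sub_const ζ)
      rw [ContinuousLinearMap.comp_id] at this
      exact this
    have hQ : HasFDerivAt (fun w : (EuclideanSpace ℂ (Fin n)) => (B ζ (w - ζ)) (w - ζ))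
        ((B ζ (w - ζ)).comp (ContinuousLinearMap.id ℝ (EuclideanSpace ℂ (Fin n))) + (B ζ).flip (w - ζ)) w :=
      (hBζw w).clm_apply ((hasFDerivAt_id w).sub_const ζ)
    have hcomb := (hA.sub hL).sub ((hQ.const_mul (1/2 : ℝ)))
    apply HasFDerivAt.hasFDerivWithinAt
    refine hcomb.congr_fderiv ?_
    refine ContinuousLinearMap.ext fun u => ?_
    simp [hψ]
    linarith [Bsymm u w, Bsymm u ζ]
  have hφb : ∀ w ∈ cb, ‖ψ w - ψ ζ‖ ≤ (m / 8) * ‖h‖ := by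
    intro w hw
    have := hψmvt w hw
    have hwh : ‖w - ζ‖ ≤ ‖h‖ := by simpa [hcb, dist_eq_norm] using hw
    calc ‖ψ w - ψ ζ‖ ≤ (m/8) * ‖w - ζ‖ := this
      _ ≤ (m/8) * ‖h‖ := by
          apply mul_le_mul_of_nonneg_left hwh; positivity
  have hφmvt := (convex_closedBall ζ ‖h‖).norm_image_sub_le_of_norm_hasFDerivWithin_le
    hφd hφb hζcb hzcb
  have hφζ : φ ζ = r ζ := by simp [hφ]
  have hφz : φ z = r z - fderiv ℝ r ζ h - (1/2) * (B ζ h) h := by simp [hφ, hh]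
  rw [hφζ, hφz] at hφmvt
  have hT : |r z - fderiv ℝ r ζ h - (1/2) * (B ζ h) h - r ζ| ≤ m/8 * ‖h‖^2 := by
    have : ‖z - ζ‖ = ‖h‖ := by rw [hh]
    rw [Real.norm_eq_abs] at hφmvt
    calc |r z - fderiv ℝ r ζ h - (1/2) * (B ζ h) h - r ζ| ≤ (m/8) * ‖h‖ * ‖z - ζ‖ := hφmvt
      _ = m/8 * ‖h‖^2 := by rw [this]; ring
  have hQb : m * ‖h‖^2 ≤ B ζ h h + B ζ (Complex.I • h) (Complex.I • h) :=
    hqm ζ (hKK' hζ) h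
  rw [leviPolynomial_re hU hr hζU z]
  rw [abs_le] at hT
  have h2 : ‖z - ζ‖ ^ 2 = ‖h‖^2 := by rw [hh]
  rw [h2]
  rw [hh] at hQb hT ⊢
  linarith [hT.1, hT.2, hQb]
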